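/- arXiv:1103.4399 — 5 statements merged into one kernel-verified Lean document; each statement's English description precedes it below -/
import Mathlib

section
/- Let A be a normed wqo (a wqo equipped with a norm |·|_A : A → ℕ such that {x ∈ A : |x|_A < n} is finite for every n), let g : ℕ → ℕ be a control function, and let n ∈ ℕ. Then there exists a finite maximal length L ∈ ℕ for (g,n)-controlled bad sequences over A; i.e., every (g,n)-controlled bad sequence has length at most L and some has length L. -/
/-- A sequence (as a list) is bad: no i < j with x_i ≤ x_j. -/
def IsBad {A : Type*} (le : A → A → Prop) (w : List A) : Prop :=
  ∀ i j : Fin w.length, (i : ℕ) < (j : ℕ) → ¬ le (w.get i) (w.get j)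

/-- A sequence is (g,n)-controlled: |x_i| < g^i(n). -/
def IsControlled {A : Type*} (nrm : A → ℕ) (g : ℕ → ℕ) (n : ℕ) (w : List A) : Prop :=
  ∀ i : Fin w.length, nrm (w.get i) < g^[(i : ℕ)] n

lemma isBad_of_prefix {A : Type*} (le : A → A → Prop) {w w' : List A}
    (h : w <+: w') (hb : IsBad le w') : IsBad le w := by
  intro i j hij hle
  have hi : (i : ℕ) < w'.length := lt_of_lt_of_le i.2 h.length_le
  have hj : (j : ℕ) < w'.length := lt_of_lt_of_le j.2 h.length_le
  apply hb ⟨i, hi⟩ ⟨j, hj⟩ hij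
  simpa [List.get_eq_getElem, h.getElem i.2, h.getElem j.2] using hle

lemma isControlled_of_prefix {A : Type*} (nrm : A → ℕ) (g : ℕ → ℕ) (n : ℕ) {w w' : List A}
    (h : w <+: w') (hb : IsControlled nrm g n w') : IsControlled nrm g n w := by
  intro i
  have hi : (i : ℕ) < w'.length := lt_of_lt_of_le i.2 h.length_le
  have := hb ⟨i, hi⟩
  simpa [List.get_eq_getElem, h.getElem i.2] using this

lemma isBad_nil {A : Type*} (le : A → A → Prop) : IsBad le ([] : List A) := by
  intro i; exact i.elim0

lemma isControlled_nil {A : Type*} (nrm : A → ℕ) (g : ℕ → ℕ) (n : ℕ) :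
    IsControlled nrm g n ([] : List A) := by
  intro i; exact i.elim0

/-- For a normed wqo (proper norm) and any control (g,n) there is a finite
maximal length for (g,n)-controlled bad sequences. -/
theorem stmt2 {A : Type*} (le : A → A → Prop) (nrm : A → ℕ)
    (hrefl : ∀ a, le a a)
    (htrans : ∀ a b c, le a b → le b c → le a c)
    (hwqo : ∀ f : ℕ → A, ∃ i j, i < j ∧ le (f i) (f j))
    (hproper : ∀ n, {x : A | nrm x < n}.Finite)
    (g : ℕ → ℕ) (n : ℕ) :
    ∃ L : ℕ,
      (∀ w : List A, IsBad le w → IsControlled nrm g n w → w.length ≤ L) ∧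
      (∃ w : List A, IsBad le w ∧ IsControlled nrm g n w ∧ w.length = L) := by
  classical
  -- Ext w: w has arbitrarily long bad controlled extensions
  set Ext : List A → Prop := fun w =>
    ∀ L : ℕ, ∃ w' : List A, IsBad le w' ∧ IsControlled nrm g n w' ∧ w <+: w' ∧ L ≤ w'.length
    with hExtDef
  have key : ∃ L, ∀ w : List A, IsBad le w → IsControlled nrm g n w → w.length ≤ L := by
    by_contra hbd
    push_neg at hbd
    -- extension step
    have hstep : ∀ w : List A, Ext w → ∃ a : A, Ext (w ++ [a]) := by
      intro w hw
      by_contra hno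
      push_neg at hno
      simp only [hExtDef, not_forall] at hno
      -- for each a, a bound beyond which there is no extension of w ++ [a]
      choose La hLa using hno
      set S : Finset A := (hproper (g^[w.length] n)).toFinset with hS
      set B : ℕ := Finset.sup S La with hB
      obtain ⟨w', hbad, hctl, hpre, hlen⟩ := hw (max (B + 1) (w.length + 1))
      have hlenB : B + 1 ≤ w'.length := le_trans (le_max_left _ _) hlen
      have hlenw : w.length + 1 ≤ w'.length := le_trans (le_max_right _ _) hlen
      have hm : w.length < w'.length := hlenw
      obtain ⟨t, ht⟩ := hpre
      have htne' : t ≠ [] := by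
        intro h
        rw [h, List.append_nil] at ht
        subst ht
        exact absurd hm (lt_irrefl _)
      set a : A := t.head htne' with ha
      have hwa : w ++ [a] <+: w' := by
        refine ⟨t.tail, ?_⟩
        rw [List.append_assoc, List.singleton_append, List.cons_head_tail, ht]
      -- a has small norm
      have haS : a ∈ S := by
        have hwl : w.length < w'.length := hm
        have hnrm := hctl ⟨w.length, hwl⟩
        have hget : w'[w.length]'hwl = a := by
          rw [← hwa.getElem (by simp : w.length < (w ++ [a]).length)]
          simp
        rw [List.get_eq_getElem] at hnrm
        simp only [Fin.val_mk] at hnrm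
        rw [hget] at hnrm
        simp only [hS, Set.Finite.mem_toFinset, Set.mem_setOf_eq]
        exact hnrm
      have hLaB : La a ≤ B := Finset.le_sup haS
      exact hLa a ⟨w', hbad, hctl, hwa, by omega⟩
    choose step hstepp using hstep
    have hExtNil : Ext ([] : List A) := by
      intro L
      obtain ⟨w, hb, hc, hl⟩ := hbd L
      exact ⟨w, hb, hc, List.nil_prefix, le_of_lt hl⟩
    -- build the chain
    let c : ℕ → {w : List A // Ext w} := fun k =>
      Nat.rec ⟨[], hExtNil⟩ (fun _ p => ⟨p.1 ++ [step p.1 p.2], hstepp p.1 p.2⟩) k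
    have hclen : ∀ k, (c k).1.length = k := by
      intro k; induction k with
      | zero => rfl
      | succ k ih => simp [c, List.length_append, ih]
    have hcpre : ∀ k m, k ≤ m → (c k).1 <+: (c m).1 := by
      intro k m hkm
      induction m with
      | zero => simp_all
      | succ m ih =>
        rcases Nat.lt_or_ge k (m + 1) with h | h
        · exact (ih (by omega)).trans ⟨[step (c m).1 (c m).2], rfl⟩
        · have : k = m + 1 := by omega
          subst this; exact List.prefix_refl _
    -- infinite bad sequence
    have hilt : ∀ i : ℕ, i < (c (i+1)).1.length := by
      intro i; have := hclen (i+1); omega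
    let f : ℕ → A := fun i => (c (i+1)).1.get ⟨i, hilt i⟩
    obtain ⟨i, j, hij, hle⟩ := hwqo f
    have hjbad : IsBad le (c (j+1)).1 := by
      obtain ⟨w', hb, _, hp, _⟩ := (c (j+1)).2 0
      exact isBad_of_prefix le hp hb
    have hiltj : i < (c (j+1)).1.length := by have := hclen (j+1); omega
    have hfi : f i = (c (j+1)).1.get ⟨i, hiltj⟩ := by
      have hp : (c (i+1)).1 <+: (c (j+1)).1 := hcpre (i+1) (j+1) (by omega)
      simp only [f, List.get_eq_getElem]
      rw [hp.getElem (hilt i)]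
    have hjltj : j < (c (j+1)).1.length := hilt j
    apply hjbad ⟨i, hiltj⟩ ⟨j, hjltj⟩ hij
    rw [← hfi]
    exact hle
  obtain ⟨L0, hL0⟩ := key
  -- the set of lengths
  set Ls : Set ℕ := {l | ∃ w : List A, IsBad le w ∧ IsControlled nrm g n w ∧ w.length = l}
    with hLs
  have hne : Ls.Nonempty := ⟨0, [], isBad_nil le, isControlled_nil nrm g n, rfl⟩
  have hbdd : BddAbove Ls := by
    refine ⟨L0, fun l hl => ?_⟩
    obtain ⟨w, hb, hc, rfl⟩ := hl
    exact hL0 w hb hc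
  refine ⟨sSup Ls, fun w hb hc => le_csSup hbdd ⟨w, hb, hc, rfl⟩, ?_⟩
  exact Nat.sSup_mem hne hbdd
end

section
/- Descent Equation: For a normed wqo A, a control function g, and n ∈ ℕ, the maximal length L_A(n) of (g,n)-controlled bad sequences satisfies L_A(n) = max over x ∈ A_{<n} of (1 + L_{A/x}(g(n))), where the maximum over the empty set is 0. -/
/-- `L` is the maximal length of (g,n)-controlled bad sequences. -/
def MaxLen {A : Type*} (le : A → A → Prop) (nrm : A → ℕ) (g : ℕ → ℕ) (n L : ℕ) : Prop :=
  (∀ w : List A, IsBad le w → IsControlled nrm g n w → w.length ≤ L) ∧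
  (∃ w : List A, IsBad le w ∧ IsControlled nrm g n w ∧ w.length = L)

/-- Descent Equation: L_A(n) = max_{x ∈ A_{<n}} (1 + L_{A/x}(g(n))),
the max over the empty set being 0 (`sSup` on `ℕ`). -/
theorem stmt3 {A : Type*} (le : A → A → Prop) (nrm : A → ℕ)
    (hrefl : ∀ a, le a a)
    (htrans : ∀ a b c, le a b → le b c → le a c)
    (hwqo : ∀ f : ℕ → A, ∃ i j, i < j ∧ le (f i) (f j))
    (hproper : ∀ n, {x : A | nrm x < n}.Finite)
    (g : ℕ → ℕ) (n : ℕ) (LA : ℕ) (LX : A → ℕ)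
    (hLA : MaxLen le nrm g n LA)
    (hLX : ∀ x : A, nrm x < n →
      MaxLen (fun y z : {y : A // ¬ le x y} => le y.1 z.1)
        (fun y : {y : A // ¬ le x y} => nrm y.1) g (g n) (LX x)) :
    LA = sSup {m : ℕ | ∃ x : A, nrm x < n ∧ m = 1 + LX x} := by
  obtain ⟨hub, w, hbad, hctrl, hlen⟩ := hLA
  set S := {m : ℕ | ∃ x : A, nrm x < n ∧ m = 1 + LX x} with hS
  have key : ∀ m ∈ S, m ≤ LA := by
    rintro m ⟨x, hx, rfl⟩
    obtain ⟨hub', w', hbad', hctrl', hlen'⟩ := hLX x hx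
    have hb : IsBad le (x :: w'.map Subtype.val) := by
      intro i j hij
      match i, j with
      | ⟨0, _⟩, ⟨0, _⟩ => simp at hij
      | ⟨0, _⟩, ⟨j+1, hj⟩ =>
        simp only [List.get_eq_getElem, List.getElem_cons_zero, List.getElem_cons_succ]
        have hj' : j < w'.length := by simpa using hj
        rw [List.getElem_map]
        exact (w'[j]).2
      | ⟨i+1, _⟩, ⟨0, _⟩ => simp at hij
      | ⟨i+1, hi⟩, ⟨j+1, hj⟩ =>
        have hi' : i < w'.length := by simpa using hi
        have hj' : j < w'.length := by simpa using hj
        simp only [List.get_eq_getElem, List.getElem_cons_succ, List.getElem_map]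
        exact hbad' ⟨i, hi'⟩ ⟨j, hj'⟩ (by simpa using hij)
    have hc : IsControlled nrm g n (x :: w'.map Subtype.val) := by
      intro i
      match i with
      | ⟨0, _⟩ => simpa using hx
      | ⟨i+1, hi⟩ =>
        have hi' : i < w'.length := by simpa using hi
        simp only [List.get_eq_getElem, List.getElem_cons_succ, List.getElem_map]
        have := hctrl' ⟨i, hi'⟩
        simpa [Function.iterate_succ_apply] using this
    have := hub _ hb hc
    simp only [List.length_cons, List.length_map, hlen'] at this
    omega
  have hbdd : BddAbove S := ⟨LA, key⟩
  apply le_antisymm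
  · match w with
    | [] => simp at hlen; omega
    | x :: rest =>
      have hx : nrm x < n := by
        have := hctrl ⟨0, by simp⟩
        simpa using this
      have hmem : ∀ y ∈ rest, ¬ le x y := by
        intro y hy
        obtain ⟨j, hj, rfl⟩ := List.mem_iff_getElem.mp hy
        have := hbad ⟨0, by simp⟩ ⟨j+1, by simp; omega⟩ (by simp)
        simpa using this
      set w' : List {y : A // ¬ le x y} := rest.pmap (fun y h => ⟨y, h⟩) hmem with hw'
      have hlw' : w'.length = rest.length := by simp [hw']
      obtain ⟨hub', -⟩ := hLX x hx
      have hbad' : IsBad (fun y z : {y : A // ¬ le x y} => le y.1 z.1) w' := by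
        intro i j hij
        have hi' : (i : ℕ) < rest.length := by rw [← hlw']; exact i.2
        have hj' : (j : ℕ) < rest.length := by rw [← hlw']; exact j.2
        simp only [List.get_eq_getElem, hw', List.getElem_pmap]
        have := hbad ⟨(i:ℕ)+1, by simp; omega⟩ ⟨(j:ℕ)+1, by simp; omega⟩ (by simpa using hij)
        simpa using this
      have hctrl' : IsControlled (fun y : {y : A // ¬ le x y} => nrm y.1) g (g n) w' := by
        intro i
        have hi' : (i : ℕ) < rest.length := by rw [← hlw']; exact i.2
        simp only [List.get_eq_getElem, hw', List.getElem_pmap]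
        have := hctrl ⟨(i:ℕ)+1, by simp; omega⟩
        simpa [Function.iterate_succ_apply] using this
      have hle := hub' w' hbad' hctrl'
      rw [hlw'] at hle
      have : LA ≤ 1 + LX x := by
        simp only [List.length_cons] at hlen
        omega
      exact this.trans (le_csSup hbdd ⟨x, hx, rfl⟩)
  · exact csSup_le' key
end

section
/- For normed wqos A and B and elements x ∈ A, y ∈ B, the residual (A × B)/⟨x,y⟩ reflects into ((A/x) × B) + (A × (B/y)). -/
/-- Nwqo reflection: order-reflecting and norm-decreasing map. -/
def IsReflection {A B : Type*} (leA : A → A → Prop) (nA : A → ℕ)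
    (leB : B → B → Prop) (nB : B → ℕ) (h : A → B) : Prop :=
  (∀ x y : A, leB (h x) (h y) → leA x y) ∧ ∀ x : A, nB (h x) ≤ nA x

/-- Disjoint-sum ordering. -/
def sumLe {A B : Type*} (leA : A → A → Prop) (leB : B → B → Prop) :
    A ⊕ B → A ⊕ B → Prop
  | Sum.inl a, Sum.inl a' => leA a a'
  | Sum.inr b, Sum.inr b' => leB b b'
  | _, _ => False

/-- (A × B)/⟨x,y⟩ reflects into ((A/x) × B) + (A × (B/y)). -/
theorem stmt6 {A B : Type*}
    (leA : A → A → Prop) (nA : A → ℕ) (leB : B → B → Prop) (nB : B → ℕ)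
    (hreflA : ∀ a, leA a a) (htransA : ∀ a b c, leA a b → leA b c → leA a c)
    (hwqoA : ∀ f : ℕ → A, ∃ i j, i < j ∧ leA (f i) (f j))
    (hproperA : ∀ n, {a : A | nA a < n}.Finite)
    (hreflB : ∀ a, leB a a) (htransB : ∀ a b c, leB a b → leB b c → leB a c)
    (hwqoB : ∀ f : ℕ → B, ∃ i j, i < j ∧ leB (f i) (f j))
    (hproperB : ∀ n, {b : B | nB b < n}.Finite)
    (x : A) (y : B) :
    ∃ h : {p : A × B // ¬ (leA x p.1 ∧ leB y p.2)} →
        ({a : A // ¬ leA x a} × B) ⊕ (A × {b : B // ¬ leB y b}),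
      IsReflection
        (fun p q : {p : A × B // ¬ (leA x p.1 ∧ leB y p.2)} =>
          leA p.1.1 q.1.1 ∧ leB p.1.2 q.1.2)
        (fun p => max (nA p.1.1) (nB p.1.2))
        (sumLe
          (fun p q : {a : A // ¬ leA x a} × B => leA p.1.1 q.1.1 ∧ leB p.2 q.2)
          (fun p q : A × {b : B // ¬ leB y b} => leA p.1 q.1 ∧ leB p.2.1 q.2.1))
        (Sum.elim (fun p => max (nA p.1.1) (nB p.2)) (fun p => max (nA p.1) (nB p.2.1)))
        h := by
  classical
  refine ⟨fun p => if ha : leA x p.1.1 then Sum.inr ⟨p.1.1, ⟨p.1.2, fun hb => p.2 ⟨ha, hb⟩⟩⟩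
    else Sum.inl ⟨⟨p.1.1, ha⟩, p.1.2⟩, ?_, ?_⟩
  · intro p q hle
    by_cases ha : leA x p.1.1 <;> by_cases hb : leA x q.1.1 <;>
      simp only [ha, hb, dif_pos, dif_neg, not_false_iff, sumLe] at hle <;>
      first
      | exact hle
      | exact absurd hle id
      | exact absurd (htransA _ _ _ ha hle.1) hb
  · intro p
    by_cases ha : leA x p.1.1 <;> simp [ha]
end

section
/- For a nonempty normed wqo A and elements x₁, ..., x_n ∈ A with n ≥ 1, the residual A*/(x₁...x_n) reflects into (A/x₁)* × (1 + (↑_A x₁) × (A*/(x₂...x_n))), where ↑_A x₁ = {y ∈ A : x₁ ≤ y} and 1 denotes a singleton nwqo with norm 0. -/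
/-- Norm of a word: max of its length and the norms of its letters. -/
def listNrm {A : Type*} (nA : A → ℕ) (w : List A) : ℕ :=
  max w.length ((w.map nA).foldr max 0)

namespace Stmt7Aux

open List

variable {A : Type*}

theorem sfl_prefix {R : A → A → Prop} (u : List A) {l m : List A}
    (h : SublistForall₂ R l m) : SublistForall₂ R l (u ++ m) := by
  induction u with
  | nil => simpa
  | cons a u ih => exact SublistForall₂.cons_right ih

theorem sfl_append {R : A → A → Prop} {l₁ l₂ l₃ l₄ : List A}
    (h₁ : SublistForall₂ R l₁ l₂) (h₂ : SublistForall₂ R l₃ l₄) :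
    SublistForall₂ R (l₁ ++ l₃) (l₂ ++ l₄) := by
  induction h₁ with
  | nil => exact sfl_prefix _ h₂
  | cons hr _ ih => exact SublistForall₂.cons hr ih
  | cons_right _ ih => exact SublistForall₂.cons_right ih

theorem sfl_map {B : Type*} {R : A → A → Prop} {S : B → B → Prop} (f : B → A)
    (hf : ∀ a b, S a b → R (f a) (f b)) {l m : List B} (h : SublistForall₂ S l m) :
    SublistForall₂ R (l.map f) (m.map f) := by
  induction h with
  | nil => exact SublistForall₂.nil
  | cons hr _ ih => exact SublistForall₂.cons (hf _ _ hr) ih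
  | cons_right _ ih => exact SublistForall₂.cons_right ih

theorem foldr_max_sublist {l m : List ℕ} (h : l.Sublist m) :
    l.foldr max 0 ≤ m.foldr max 0 := by
  induction h with
  | slnil => exact le_refl _
  | cons a _ ih => exact le_trans ih (le_max_right _ _)
  | cons_cons a _ ih => exact max_le_max (le_refl _) ih

theorem le_foldr_max {l : List ℕ} {a : ℕ} (h : a ∈ l) : a ≤ l.foldr max 0 := by
  induction l with
  | nil => simp at h
  | cons b l ih =>
    rcases List.mem_cons.mp h with rfl | h
    · exact le_max_left _ _
    · exact le_trans (ih h) (le_max_right _ _)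

theorem listNrm_sublist (nA : A → ℕ) {l m : List A} (h : l.Sublist m) :
    listNrm nA l ≤ listNrm nA m :=
  max_le_max h.length_le (foldr_max_sublist (h.map nA))

theorem nrm_le_listNrm (nA : A → ℕ) {a : A} {l : List A} (h : a ∈ l) :
    nA a ≤ listNrm nA l :=
  le_trans (le_foldr_max (List.mem_map_of_mem (f := nA) h)) (le_max_right _ _)

theorem listNrm_comp {B : Type*} (nA : A → ℕ) (f : B → A) (l : List B) :
    listNrm (fun b => nA (f b)) l = listNrm nA (l.map f) := by
  simp [listNrm, List.map_map, Function.comp_def]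

theorem dropWhile_head_eq_false {pb : A → Bool} {l : List A} {a : A} {w : List A}
    (h : l.dropWhile pb = a :: w) : pb a = false := by
  have := List.head_dropWhile_not pb (l := l) (by simp [h])
  simpa only [h, List.head_cons] using this

/-- The classical-decidable test for `¬ leA x a`. -/
noncomputable def pb (leA : A → A → Prop) (x : A) : A → Bool :=
  fun a => @decide (¬ leA x a) (Classical.propDecidable _)

theorem pb_true {leA : A → A → Prop} {x a : A} (h : pb leA x a = true) : ¬ leA x a :=
  @of_decide_eq_true _ (Classical.propDecidable _) h

theorem pb_false {leA : A → A → Prop} {x a : A} (h : pb leA x a = false) : leA x a :=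
  Classical.not_not.mp (@of_decide_eq_false _ (Classical.propDecidable _) h)

/-- The reflection map. -/
noncomputable def hmap (leA : A → A → Prop) (x : A) (rest : List A)
    (v : {v : List A // ¬ List.SublistForall₂ leA (x :: rest) v}) :
    List {a : A // ¬ leA x a} ×
      (Unit ⊕ ({a : A // leA x a} × {v : List A // ¬ List.SublistForall₂ leA rest v})) :=
  ((v.1.takeWhile (pb leA x)).attachWith (fun a => ¬ leA x a)
      (fun _ ha => pb_true (List.mem_takeWhile_imp ha)),
   match hd : v.1.dropWhile (pb leA x) with
   | [] => Sum.inl ()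
   | a :: w =>
     Sum.inr (⟨a, pb_false (dropWhile_head_eq_false hd)⟩,
       ⟨w, fun hw => v.2 (by
         have h1 : SublistForall₂ leA (x :: rest) (a :: w) :=
           SublistForall₂.cons (pb_false (dropWhile_head_eq_false hd)) hw
         have h2 := sfl_prefix (v.1.takeWhile (pb leA x)) h1
         rwa [← hd, List.takeWhile_append_dropWhile] at h2)⟩))

theorem hmap_spec (leA : A → A → Prop) (x : A) (rest : List A)
    (v : {v : List A // ¬ List.SublistForall₂ leA (x :: rest) v}) :
    ((hmap leA x rest v).1.map Subtype.val = v.1.takeWhile (pb leA x)) ∧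
    (((hmap leA x rest v).2 = Sum.inl () ∧ v.1 = v.1.takeWhile (pb leA x)) ∨
     ∃ a w, (hmap leA x rest v).2 = Sum.inr (a, w) ∧
       v.1 = v.1.takeWhile (pb leA x) ++ a.1 :: w.1) := by
  unfold hmap
  refine ⟨List.unattach_attachWith .., ?_⟩
  dsimp only
  split
  · next hd =>
    left
    refine ⟨rfl, ?_⟩
    conv_lhs => rw [← List.takeWhile_append_dropWhile (p := pb leA x) (l := v.1)]
    rw [hd, List.append_nil]
  · next a w hd =>
    right
    refine ⟨_, _, rfl, ?_⟩
    conv_lhs => rw [← List.takeWhile_append_dropWhile (p := pb leA x) (l := v.1)]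
    exact congrArg (fun t => List.takeWhile (pb leA x) v.1 ++ t) hd

end Stmt7Aux

open Stmt7Aux in
/-- For a nonempty nwqo A and a nonempty word x :: rest,
A*/(x·rest) reflects into (A/x)* × (1 + ↑x × (A*/rest)). -/
theorem stmt7 {A : Type*} (leA : A → A → Prop) (nA : A → ℕ)
    (hne : Nonempty A)
    (hrefl : ∀ a, leA a a) (htrans : ∀ a b c, leA a b → leA b c → leA a c)
    (hwqo : ∀ f : ℕ → A, ∃ i j, i < j ∧ leA (f i) (f j))
    (hproper : ∀ n, {a : A | nA a < n}.Finite)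
    (x : A) (rest : List A) :
    ∃ h : {v : List A // ¬ List.SublistForall₂ leA (x :: rest) v} →
        List {a : A // ¬ leA x a} ×
          (Unit ⊕ ({a : A // leA x a} × {v : List A // ¬ List.SublistForall₂ leA rest v})),
      IsReflection
        (fun v w : {v : List A // ¬ List.SublistForall₂ leA (x :: rest) v} =>
          List.SublistForall₂ leA v.1 w.1)
        (fun v => listNrm nA v.1)
        (fun p q =>
          List.SublistForall₂ (fun a b : {a : A // ¬ leA x a} => leA a.1 b.1) p.1 q.1 ∧
          sumLe (fun _ _ : Unit => True)
            (fun u v : {a : A // leA x a} × {v : List A // ¬ List.SublistForall₂ leA rest v} =>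
              leA u.1.1 v.1.1 ∧ List.SublistForall₂ leA u.2.1 v.2.1)
            p.2 q.2)
        (fun p => max (listNrm (fun a : {a : A // ¬ leA x a} => nA a.1) p.1)
          (Sum.elim (fun _ : Unit => 0)
            (fun q : {a : A // leA x a} × {v : List A // ¬ List.SublistForall₂ leA rest v} =>
              max (nA q.1.1) (listNrm nA q.2.1)) p.2))
        h := by
  refine ⟨hmap leA x rest, ?_, ?_⟩
  · -- order-reflecting
    intro v w ⟨h1, h2⟩
    obtain ⟨mv, sv⟩ := hmap_spec leA x rest v
    obtain ⟨mw, sw⟩ := hmap_spec leA x rest w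
    have htake : List.SublistForall₂ leA (v.1.takeWhile (pb leA x))
        (w.1.takeWhile (pb leA x)) := by
      rw [← mv, ← mw]
      exact sfl_map Subtype.val (fun _ _ h => h) h1
    rcases sv with ⟨ev, hv⟩ | ⟨a, w', ev, hv⟩ <;>
      rcases sw with ⟨ew, hw⟩ | ⟨b, w₂, ew, hw⟩
    · rw [hv, hw]; exact htake
    · rw [ev, ew] at h2; exact h2.elim
    · rw [ev, ew] at h2; exact h2.elim
    · rw [ev, ew] at h2
      obtain ⟨hab, hww⟩ := h2
      rw [hv, hw]
      exact sfl_append htake (List.SublistForall₂.cons hab hww)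
  · -- norm-decreasing
    intro v
    obtain ⟨mv, sv⟩ := hmap_spec leA x rest v
    refine max_le ?_ ?_
    · rw [listNrm_comp nA Subtype.val, mv]
      exact listNrm_sublist nA (List.takeWhile_sublist _)
    · rcases sv with ⟨ev, _⟩ | ⟨a, w', ev, hv⟩
      · rw [ev]; exact Nat.zero_le _
      · rw [ev]
        refine max_le ?_ ?_
        · exact nrm_le_listNrm nA (by rw [hv]; exact List.mem_append_right _ (List.mem_cons_self))
        · refine listNrm_sublist nA ?_
          rw [hv]
          exact ((List.sublist_cons_self _ _).trans (List.sublist_append_right _ _))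
end

section
/- For the finite alphabet Γ_{p+1} (an antichain of p+1 letters of norm 0) and any word (x₁...x_n) ∈ Γ_{p+1}*, the residual Γ_{p+1}*/(x₁...x_n) reflects into Γ_n × (Γ_p*)^n. -/
section Aux

variable {α : Type*} [DecidableEq α]

lemma sfeq {α : Type*} {l₁ l₂ : List α} :
    List.SublistForall₂ (· = ·) l₁ l₂ ↔ l₁.Sublist l₂ := by
  rw [List.sublistForall₂_iff]
  constructor
  · rintro ⟨l, h1, h2⟩
    rw [List.forall₂_eq_eq_eq] at h1; subst h1; exact h2
  · exact fun h => ⟨l₁, List.forall₂_refl _, h⟩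

def pieces : List α → List α → List (List α)
  | [], _ => []
  | x :: w, v =>
    if x ∈ v then v.takeWhile (· ≠ x) :: pieces w ((v.dropWhile (· ≠ x)).tail)
    else [v]

lemma decomp {x : α} {v : List α} (h : x ∈ v) :
    v = v.takeWhile (· ≠ x) ++ x :: (v.dropWhile (· ≠ x)).tail := by
  have hne : v.dropWhile (· ≠ x) ≠ [] := by
    intro hnil
    have := List.takeWhile_append_dropWhile (p := (· ≠ x)) (l := v)
    rw [hnil, List.append_nil] at this
    have := List.mem_takeWhile_imp (p := (· ≠ x)) (this ▸ h)
    simp at this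
  have hhead := List.head_dropWhile_not (· ≠ x) (l := v) hne
  simp at hhead
  conv_lhs => rw [← List.takeWhile_append_dropWhile (p := (· ≠ x)) (l := v),
    ← List.cons_head_tail hne]
  simp only [ne_eq, decide_not]
  rw [hhead]

lemma pieces_ne_nil {x : α} {w v : List α} : pieces (x :: w) v ≠ [] := by
  by_cases h : x ∈ v <;> simp [pieces, h]

lemma cons_sublist_of_tail {x : α} {w' v : List α} (h : x ∈ v)
    (hs : w'.Sublist ((v.dropWhile (· ≠ x)).tail)) : (x :: w').Sublist v := by
  conv_rhs => rw [decomp h]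
  exact ((hs.cons₂ x).trans (List.sublist_append_right _ _))

lemma pieces_length_le : ∀ {w v : List α}, ¬ w.Sublist v → (pieces w v).length ≤ w.length
  | [], v, h => absurd (List.nil_sublist v) h
  | x :: w, v, h => by
    by_cases hx : x ∈ v
    · have : ¬ w.Sublist ((v.dropWhile (· ≠ x)).tail) :=
        fun hs => h (cons_sublist_of_tail hx hs)
      simpa [pieces, hx] using pieces_length_le this
    · simp [pieces, hx]

lemma pieces_sublist : ∀ {w v l : List α}, l ∈ pieces w v → l.Sublist v
  | [], v, l, h => by simp [pieces] at h
  | x :: w, v, l, h => by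
    by_cases hx : x ∈ v
    · simp only [pieces, if_pos hx, List.mem_cons] at h
      rcases h with rfl | h
      · exact List.takeWhile_sublist _
      · refine (pieces_sublist h).trans ?_
        conv_rhs => rw [decomp hx]
        exact ((List.sublist_cons_self x _).trans (List.sublist_append_right _ _))
    · simp only [pieces, if_neg hx, List.mem_singleton] at h
      subst h; exact List.Sublist.refl _

lemma pieces_eq_nil {w v : List α} (h : pieces w v = []) : w = [] := by
  cases w with
  | nil => rfl
  | cons x w => exact absurd h pieces_ne_nil

lemma pieces_avoid : ∀ {w v : List α},
    List.Forall₂ (fun a l => a ∉ l) (w.take (pieces w v).length) (pieces w v)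
  | [], v => by simp [pieces]
  | x :: w, v => by
    by_cases hx : x ∈ v
    · simp only [pieces, if_pos hx, List.length_cons, List.take_succ_cons]
      refine List.Forall₂.cons ?_ pieces_avoid
      intro hmem
      have := List.mem_takeWhile_imp hmem
      simp at this
    · simp only [pieces, if_neg hx, List.length_singleton, List.take_succ_cons,
        List.take_zero]
      exact List.Forall₂.cons hx List.Forall₂.nil

lemma pieces_reflect : ∀ {w v u : List α}, ¬ w.Sublist v → ¬ w.Sublist u →
    List.Forall₂ List.Sublist (pieces w v) (pieces w u) → v.Sublist u
  | [], v, u, hv, _, _ => absurd (List.nil_sublist v) hv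
  | x :: w, v, u, hv, hu, hf => by
    by_cases hxv : x ∈ v <;> by_cases hxu : x ∈ u
    · simp only [pieces, if_pos hxv, if_pos hxu] at hf
      cases hf with
      | cons h1 h2 =>
        have hv' : ¬ w.Sublist ((v.dropWhile (· ≠ x)).tail) :=
          fun hs => hv (cons_sublist_of_tail hxv hs)
        have hu' : ¬ w.Sublist ((u.dropWhile (· ≠ x)).tail) :=
          fun hs => hu (cons_sublist_of_tail hxu hs)
        have hrec := pieces_reflect hv' hu' h2
        rw [decomp hxv, decomp hxu]
        exact h1.append (hrec.cons₂ x)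
    · simp only [pieces, if_pos hxv, if_neg hxu] at hf
      cases hf with
      | cons h1 h2 =>
        have hw : w = [] := pieces_eq_nil (List.forall₂_nil_right_iff.mp h2)
        exact absurd (hw ▸ List.singleton_sublist.mpr hxv) hv
    · simp only [pieces, if_neg hxv, if_pos hxu] at hf
      cases hf with
      | cons h1 h2 =>
        have hw : w = [] := pieces_eq_nil (List.forall₂_nil_left_iff.mp h2)
        exact absurd (hw ▸ List.singleton_sublist.mpr hxu) hu
    · simp only [pieces, if_neg hxv, if_neg hxu] at hf
      cases hf with
      | cons h1 h2 => exact h1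

def down? {p : ℕ} (a b : Fin (p + 1)) : Option (Fin p) :=
  if h : b.val < a.val then some ⟨b.val, by have := a.isLt; omega⟩
  else if h' : a.val < b.val then some ⟨b.val - 1, by have := b.isLt; omega⟩
  else none

lemma down?_isSome {p : ℕ} {a b : Fin (p + 1)} (h : b ≠ a) : (down? a b).isSome := by
  have : b.val ≠ a.val := fun he => h (Fin.ext he)
  unfold down?
  rcases lt_or_gt_of_ne this with h1 | h1
  · simp [h1]
  · simp [down?, Nat.lt_asymm h1, h1]

lemma down?_inj {p : ℕ} {a b c : Fin (p + 1)} (hb : b ≠ a) (hc : c ≠ a) :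
    down? a b = down? a c → b = c := by
  have hb' : b.val ≠ a.val := fun he => hb (Fin.ext he)
  have hc' : c.val ≠ a.val := fun he => hc (Fin.ext he)
  unfold down?
  split_ifs <;> intro h <;> first
    | (apply Fin.ext; simp only [Option.some.injEq, Fin.mk.injEq] at h; omega)
    | (exfalso; simp only [Option.some.injEq, Fin.mk.injEq] at h; omega)
    | omega

def encode {p : ℕ} (a : Fin (p + 1)) (l : List (Fin (p + 1))) : List (Fin p) :=
  l.filterMap (down? a)

lemma encode_length {p : ℕ} {a : Fin (p + 1)} : ∀ {l : List (Fin (p + 1))},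
    a ∉ l → (encode a l).length = l.length
  | [], _ => rfl
  | b :: t, h => by
    have hb : b ≠ a := fun he => h (he ▸ List.mem_cons_self (a := b) (l := t))
    have ht : a ∉ t := fun he => h (List.mem_cons_of_mem _ he)
    obtain ⟨c, hc⟩ := Option.isSome_iff_exists.mp (down?_isSome hb)
    rw [encode, List.filterMap_cons_some hc, List.length_cons, List.length_cons]
    rw [show (t.filterMap (down? a)) = encode a t from rfl, encode_length ht]

lemma filterMap_sublist_reflect {β : Type*} (f : α → Option β) :
    ∀ {l₂ l₁ : List α}, (∀ x ∈ l₁, (f x).isSome) →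
    (∀ x ∈ l₁, ∀ y ∈ l₂, f x = f y → x = y) →
    (l₁.filterMap f).Sublist (l₂.filterMap f) → l₁.Sublist l₂
  | [], l₁, hsome, _, hsub => by
    simp only [List.filterMap_nil, List.sublist_nil] at hsub
    cases l₁ with
    | nil => exact List.Sublist.refl _
    | cons a s =>
      have := hsome a (List.mem_cons_self (a := a) (l := s))
      obtain ⟨d, hd⟩ := Option.isSome_iff_exists.mp this
      simp [List.filterMap_cons, hd] at hsub
  | b :: t, l₁, hsome, hinj, hsub => by
    cases hfb : f b with
    | none =>
      rw [List.filterMap_cons_none hfb] at hsub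
      exact (filterMap_sublist_reflect f hsome
        (fun x hx y hy => hinj x hx y (List.mem_cons_of_mem _ hy)) hsub).cons b
    | some c =>
      rw [List.filterMap_cons_some hfb] at hsub
      cases l₁ with
      | nil => exact List.nil_sublist _
      | cons a s =>
        have ha := hsome a (List.mem_cons_self (a := a) (l := s))
        obtain ⟨d, hd⟩ := Option.isSome_iff_exists.mp ha
        rw [List.filterMap_cons_some hd] at hsub
        cases hsub with
        | cons _ h =>
          refine (filterMap_sublist_reflect f hsome
            (fun x hx y hy => hinj x hx y (List.mem_cons_of_mem _ hy)) ?_).cons b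
          rw [List.filterMap_cons_some hd]; exact h
        | cons_cons _ h =>
          have hab : a = b :=
            hinj a (List.mem_cons_self (a := a) (l := s)) b (List.mem_cons_self (a := b) (l := t)) (by rw [hd, hfb])
          subst hab
          refine (filterMap_sublist_reflect f
            (fun x hx => hsome x (List.mem_cons_of_mem _ hx))
            (fun x hx y hy => hinj x (List.mem_cons_of_mem _ hx) y
              (List.mem_cons_of_mem _ hy)) h).cons₂ a

lemma encode_reflect {p : ℕ} {a : Fin (p + 1)} {l₁ l₂ : List (Fin (p + 1))}
    (h1 : a ∉ l₁) (h2 : a ∉ l₂) (hs : (encode a l₁).Sublist (encode a l₂)) :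
    l₁.Sublist l₂ :=
  filterMap_sublist_reflect (down? a)
    (fun x hx => down?_isSome (fun he => h1 (he ▸ hx)))
    (fun x hx y hy => down?_inj (fun he => h1 (he ▸ hx)) (fun he => h2 (he ▸ hy)))
    hs

lemma pieces_avoid' {w v : List α} (i : ℕ) (h1 : i < (pieces w v).length)
    (h2 : i < w.length) : w[i] ∉ (pieces w v)[i] := by
  have h := List.forall₂_iff_get.mp (pieces_avoid (w := w) (v := v))
  have hlen : (w.take (pieces w v).length).length = (pieces w v).length := h.1
  have key := h.2 i (by omega) h1
  simpa [List.get_eq_getElem, List.getElem_take] using key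

end Aux

/-- For Γ_{p+1} = `Fin (p+1)` (an antichain, ordered by equality, letters of
norm 0) and any word w = x₁...x_n over it, the residual Γ_{p+1}*/w reflects
into Γ_n × (Γ_p*)^n.  Words are normed by their length. -/
theorem stmt9 (p : ℕ) (w : List (Fin (p + 1))) :
    ∃ h : {v : List (Fin (p + 1)) // ¬ List.SublistForall₂ (· = ·) w v} →
        Fin w.length × (Fin w.length → List (Fin p)),
      IsReflection
        (fun v u : {v : List (Fin (p + 1)) // ¬ List.SublistForall₂ (· = ·) w v} =>
          List.SublistForall₂ (· = ·) v.1 u.1)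
        (fun v => v.1.length)
        (fun a b =>
          a.1 = b.1 ∧ ∀ i, List.SublistForall₂ (· = ·) (a.2 i) (b.2 i))
        (fun a => Finset.univ.sup fun i => (a.2 i).length)
        h := by
  by_cases hw : w = []
  · subst hw
    exact ⟨fun v => absurd List.SublistForall₂.nil v.2,
      fun x _ _ => absurd List.SublistForall₂.nil x.2,
      fun x => absurd List.SublistForall₂.nil x.2⟩
  · have hn : 0 < w.length := List.length_pos_iff.mpr hw
    have hns : ∀ v : {v : List (Fin (p + 1)) // ¬ List.SublistForall₂ (· = ·) w v},
        ¬ w.Sublist v.1 := fun v hs => v.2 (sfeq.mpr hs)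
    have hlen : ∀ v : {v : List (Fin (p + 1)) // ¬ List.SublistForall₂ (· = ·) w v},
        (pieces w v.1).length ≤ w.length := fun v => pieces_length_le (hns v)
    refine ⟨fun v => (⟨(pieces w v.1).length - 1, by have := hlen v; omega⟩,
      fun i => if h : i.val < (pieces w v.1).length
        then encode w[i.val] (pieces w v.1)[i.val] else []), ?_, ?_⟩
    · rintro x y ⟨h1, h2⟩
      rw [sfeq]
      have hnex : (pieces w x.1).length ≠ 0 := by
        cases w with
        | nil => exact absurd rfl hw
        | cons a t => simpa using pieces_ne_nil (x := a) (w := t) (v := x.1)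
      have hney : (pieces w y.1).length ≠ 0 := by
        cases w with
        | nil => exact absurd rfl hw
        | cons a t => simpa using pieces_ne_nil (x := a) (w := t) (v := y.1)
      have hl1 : (pieces w x.1).length - 1 = (pieces w y.1).length - 1 :=
        Fin.mk.injEq _ _ _ _ ▸ h1
      have hleq : (pieces w x.1).length = (pieces w y.1).length := by omega
      refine pieces_reflect (hns x) (hns y) ?_
      rw [List.forall₂_iff_get]
      refine ⟨hleq, ?_⟩
      intro i hi1 hi2
      have hiw : i < w.length := lt_of_lt_of_le hi1 (hlen x)
      have hcomp := h2 ⟨i, hiw⟩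
      simp only [dif_pos hi1, dif_pos hi2] at hcomp
      rw [sfeq] at hcomp
      simp only [List.get_eq_getElem]
      exact encode_reflect (pieces_avoid' i hi1 hiw) (pieces_avoid' i hi2 hiw) hcomp
    · intro x
      refine Finset.sup_le ?_
      intro i _
      by_cases hi : i.val < (pieces w x.1).length
      · simp only [dif_pos hi]
        rw [encode_length (pieces_avoid' i.val hi i.isLt)]
        exact ((pieces_sublist (List.getElem_mem hi)).length_le)
      · simp [dif_neg hi]
end
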